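/- Key Lemma: Let (V,A) be a near-vector space and S = {v_i : i ∈ I} a linearly independent subset of Q(V). Suppose v = Σ_i θ_i v_i and v' = Σ_i θ'_i v_i (finitely supported sums, θ_i, θ'_i ∈ A) both lie in Q(V), and suppose there exist i₀ ≠ j₀ in I with θ_{i₀}, θ'_{j₀} nonzero and +_{θ_{i₀} v_{i₀}} = +_{θ'_{j₀} v_{j₀}}. Then +_v = +_{v'} and moreover +_v = +_{θ_i v_i} for every i with θ_i ≠ 0. -/

import Mathlib

/-- The quasi-kernel `Q(V)` of the pair `(V, A)`. -/
def Qset {V : Type*} [AddCommGroup V] (A : Set (V → V)) : Set V :=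
  {x | ∀ α ∈ A, ∀ β ∈ A, ∃ γ ∈ A, α x + β x = γ x}

/-- `(V, A)` is a (non-trivial) near-vector space in the sense of André. -/
structure IsNVS {V : Type*} [AddCommGroup V] (A : Set (V → V)) : Prop where
  nontriv : ∃ x : V, x ≠ 0
  zero_mem : (0 : V → V) ∈ A
  id_mem : (id : V → V) ∈ A
  neg_mem : (fun x : V => -x) ∈ A
  endo : ∀ α ∈ A, ∀ x y : V, α (x + y) = α x + α y
  bij : ∀ α ∈ A, α ≠ 0 → Function.Bijective α
  comp_mem : ∀ α ∈ A, ∀ β ∈ A, α ≠ 0 → β ≠ 0 → α ∘ β ∈ A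
  inv_mem : ∀ α ∈ A, α ≠ 0 → ∃ β ∈ A, β ≠ 0 ∧ α ∘ β = id ∧ β ∘ α = id
  fpf : ∀ α ∈ A, ∀ β ∈ A, ∀ x : V, α x = β x → α = β ∨ x = 0
  gen : AddSubgroup.closure (Qset A) = (⊤ : AddSubgroup V)

open Classical in
/-- The addition `+_v` induced on `A` by a (nonzero quasi-kernel) element `v`:
`α +_v β` is the unique `γ` with `γ v = α v + β v`. -/
noncomputable def nvAdd {V : Type*} [AddCommGroup V] (A : Set (V → V)) (v : V)
    (α β : V → V) : V → V :=
  if h : ∃ γ ∈ A, γ v = α v + β v then h.choose else 0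

section Aux
variable {V : Type*} [AddCommGroup V] {A : Set (V → V)}

lemma nvs_map_zero (h : IsNVS A) {α : V → V} (hα : α ∈ A) : α 0 = 0 := by
  have h2 : α 0 = α 0 + α 0 := by simpa using h.endo α hα 0 0
  exact (left_eq_add.mp h2)

lemma nvs_comp (h : IsNVS A) {α β : V → V} (hα : α ∈ A) (hβ : β ∈ A) : α ∘ β ∈ A := by
  by_cases hα0 : α = 0
  · have : α ∘ β = 0 := by subst hα0; rfl
    rw [this]; exact h.zero_mem
  by_cases hβ0 : β = 0
  · have : α ∘ β = 0 := by
      subst hβ0; funext x; simpa using nvs_map_zero h hα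
    rw [this]; exact h.zero_mem
  exact h.comp_mem α hα β hβ hα0 hβ0

lemma nvs_map_sum (h : IsNVS A) {α : V → V} (hα : α ∈ A) {ι : Type*} (s : Finset ι)
    (f : ι → V) : α (∑ i ∈ s, f i) = ∑ i ∈ s, α (f i) := by
  classical
  induction s using Finset.induction with
  | empty => simpa using nvs_map_zero h hα
  | insert _ _ hx ih => rw [Finset.sum_insert hx, Finset.sum_insert hx, h.endo α hα, ih]

lemma nvs_Q_smul (h : IsNVS A) {x : V} {θ : V → V} (hx : x ∈ Qset A) (hθ : θ ∈ A) :
    θ x ∈ Qset A := by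
  intro α hα β hβ
  by_cases hθ0 : θ = 0
  · refine ⟨0, h.zero_mem, ?_⟩
    subst hθ0
    simp [nvs_map_zero h hα, nvs_map_zero h hβ]
  · obtain ⟨γ, hγA, hγ⟩ := hx (α ∘ θ) (nvs_comp h hα hθ) (β ∘ θ) (nvs_comp h hβ hθ)
    obtain ⟨θ', hθ'A, hθ'0, hcomp1, hcomp2⟩ := h.inv_mem θ hθ hθ0
    refine ⟨γ ∘ θ', nvs_comp h hγA hθ'A, ?_⟩
    have hxx : θ' (θ x) = x := congrFun hcomp2 x
    show α (θ x) + β (θ x) = γ (θ' (θ x))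
    rw [hxx]; exact hγ

lemma nvAdd_spec (h : IsNVS A) {v α β : _} (hv : v ∈ Qset A) (hα : α ∈ A) (hβ : β ∈ A) :
    nvAdd A v α β ∈ A ∧ (nvAdd A v α β) v = α v + β v := by
  have hex : ∃ γ ∈ A, γ v = α v + β v := by
    obtain ⟨γ, hγ, hγv⟩ := hv α hα β hβ
    exact ⟨γ, hγ, hγv.symm⟩
  rw [nvAdd, dif_pos hex]
  exact ⟨hex.choose_spec.1, hex.choose_spec.2⟩

lemma nvs_uniq (h : IsNVS A) {γ γ' : V → V} {v : V} (hγ : γ ∈ A) (hγ' : γ' ∈ A)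
    (hv : v ≠ 0) (heqv : γ v = γ' v) : γ = γ' :=
  (h.fpf γ hγ γ' hγ' v heqv).resolve_right hv

end Aux

/-- Key Lemma: if `v = Σ θᵢ vᵢ` and `v' = Σ θ'ᵢ vᵢ` (finitely supported combinations
over a linearly independent subset of `Q(V)`) both lie in `Q(V)` and
`+_{θ_{i₀} v_{i₀}} = +_{θ'_{j₀} v_{j₀}}` for some `i₀ ≠ j₀` with nonzero coefficients,
then `+_v = +_{v'}` and `+_v = +_{θᵢ vᵢ}` for every `i` with `θᵢ ≠ 0`. -/
theorem stmt7 {V : Type*} [AddCommGroup V] (A : Set (V → V)) (h : IsNVS A)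
    {I : Type*} (vf : I → V) (hvQ : ∀ i, vf i ∈ Qset A)
    (hindep : ∀ (s : Finset I) (θ : I → V → V), (∀ i ∈ s, θ i ∈ A) →
      ∑ i ∈ s, θ i (vf i) = 0 → ∀ i ∈ s, θ i = 0)
    (s t : Finset I) (θ θ' : I → V → V)
    (hθA : ∀ i ∈ s, θ i ∈ A) (hθ'A : ∀ i ∈ t, θ' i ∈ A)
    (hvQs : (∑ i ∈ s, θ i (vf i)) ∈ Qset A)
    (hvQt : (∑ i ∈ t, θ' i (vf i)) ∈ Qset A)
    (i0 j0 : I) (hi0 : i0 ∈ s) (hj0 : j0 ∈ t) (hne : i0 ≠ j0)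
    (hθi0 : θ i0 ≠ 0) (hθ'j0 : θ' j0 ≠ 0)
    (heq : ∀ α ∈ A, ∀ β ∈ A,
      nvAdd A (θ i0 (vf i0)) α β = nvAdd A (θ' j0 (vf j0)) α β) :
    (∀ α ∈ A, ∀ β ∈ A,
        nvAdd A (∑ i ∈ s, θ i (vf i)) α β = nvAdd A (∑ i ∈ t, θ' i (vf i)) α β) ∧
    (∀ i ∈ s, θ i ≠ 0 → ∀ α ∈ A, ∀ β ∈ A,
        nvAdd A (∑ j ∈ s, θ j (vf j)) α β = nvAdd A (θ i (vf i)) α β) := by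
  classical
  have hid0 : (id : V → V) ≠ 0 := by
    obtain ⟨x, hx⟩ := h.nontriv
    intro hc
    exact hx (by simpa using congrFun hc x)
  have hvf : ∀ i : I, vf i ≠ 0 := by
    intro i hv0
    have := hindep {i} (fun _ => id) (fun _ _ => h.id_mem)
      (by simp [hv0]) i (Finset.mem_singleton_self i)
    exact hid0 this
  have key : ∀ (u : Finset I) (σ : I → V → V), (∀ i ∈ u, σ i ∈ A) →
      (∑ i ∈ u, σ i (vf i)) ∈ Qset A → ∀ i ∈ u, σ i ≠ 0 → ∀ α ∈ A, ∀ β ∈ A,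
      nvAdd A (∑ j ∈ u, σ j (vf j)) α β = nvAdd A (σ i (vf i)) α β := by
    intro u σ hσA hQ i hi hσi α hα β hβ
    set v := ∑ j ∈ u, σ j (vf j) with hv
    set γ := nvAdd A v α β with hγdef
    obtain ⟨hγA, hγ⟩ := nvAdd_spec h hQ hα hβ
    set δ : I → V → V := fun j => nvAdd A (σ j (vf j)) α β with hδdef
    have hδspec : ∀ j ∈ u, δ j ∈ A ∧
        δ j (σ j (vf j)) = α (σ j (vf j)) + β (σ j (vf j)) :=
      fun j hj => nvAdd_spec h (nvs_Q_smul h (hvQ j) (hσA j hj)) hα hβ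
    have hη : ∀ j, ∃ η, η ∈ A ∧
        (j ∈ u → η (vf j) = δ j (σ j (vf j)) - γ (σ j (vf j))) := by
      intro j
      by_cases hj : j ∈ u
      · obtain ⟨c, hcA, hc⟩ := hvQ j (δ j ∘ σ j) (nvs_comp h (hδspec j hj).1 (hσA j hj))
          ((fun x => -x) ∘ (γ ∘ σ j)) (nvs_comp h h.neg_mem (nvs_comp h hγA (hσA j hj)))
        refine ⟨c, hcA, fun _ => ?_⟩
        have : δ j (σ j (vf j)) + -(γ (σ j (vf j))) = c (vf j) := hc
        rw [← this, sub_eq_add_neg]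
      · exact ⟨0, h.zero_mem, fun hj' => absurd hj' hj⟩
    choose η hηA hηspec using hη
    have hsum : ∑ j ∈ u, η j (vf j) = 0 := by
      have h0 : ∑ j ∈ u, η j (vf j)
          = ∑ j ∈ u, (δ j (σ j (vf j)) - γ (σ j (vf j))) :=
        Finset.sum_congr rfl fun j hj => hηspec j hj
      have h1 : ∑ j ∈ u, δ j (σ j (vf j)) = α v + β v := by
        rw [hv, nvs_map_sum h hα, nvs_map_sum h hβ, ← Finset.sum_add_distrib]
        exact Finset.sum_congr rfl fun j hj => (hδspec j hj).2
      rw [h0, Finset.sum_sub_distrib, h1, ← nvs_map_sum h hγA, ← hv, hγ, sub_self]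
    have hη0 : η i = 0 := hindep u η (fun j _ => hηA j) hsum i hi
    have hw : σ i (vf i) ≠ 0 := by
      intro hw0
      have hinj := (h.bij (σ i) (hσA i hi) hσi).injective
      have : σ i (vf i) = σ i 0 := by rw [hw0, nvs_map_zero h (hσA i hi)]
      exact hvf i (hinj this)
    have hsub : δ i (σ i (vf i)) = γ (σ i (vf i)) := by
      have h2 := hηspec i hi
      rw [hη0] at h2
      have h3 : (0 : V → V) (vf i) = 0 := rfl
      rw [h3] at h2
      exact sub_eq_zero.mp h2.symm
    exact (nvs_uniq h (hδspec i hi).1 hγA hw hsub).symm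
  refine ⟨?_, fun i hi hθi α hα β hβ => key s θ hθA hvQs i hi hθi α hα β hβ⟩
  intro α hα β hβ
  rw [key s θ hθA hvQs i0 hi0 hθi0 α hα β hβ, heq α hα β hβ,
    ← key t θ' hθ'A hvQt j0 hj0 hθ'j0 α hα β hβ]
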